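/- Let F be a linearly bounded filtration on R and v a valuation on R. For each m ∈ ℕ set λ_max^{(m)}(F_v; F) = max{λ > 0 : F^λ ⊄ F_v^m}, where F_v^μ = {f : v(f) ≥ μ}. Then the sequence m ↦ λ_max^{(m)}/m is superadditive in the sense that p · λ_max^{(m)} ≤ λ_max^{(pm)} for all positive integers p, m; consequently λ_max(F_v; F) = sup_m λ_max^{(m)}/m = lim_{m → ∞} λ_max^{(m)}/m. -/

import Mathlib

open scoped ENNReal
open Filter

/-- An `m`-filtration on `R`. -/
def IsMFiltration {R : Type*} [CommRing R] (m : Ideal R) (F : ℝ → Ideal R) : Prop :=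
  (∀ l : ℝ, l ≤ 0 → F l = ⊤) ∧
  (∀ l : ℝ, 0 < l → (F l).IsPrimary ∧ (F l).radical = m) ∧
  (∀ l μ : ℝ, l ≤ μ → F μ ≤ F l) ∧
  (∀ l : ℝ, 0 < l → ∃ ε : ℝ, 0 < ε ∧ ∀ μ : ℝ, l - ε < μ → μ ≤ l → F μ = F l) ∧
  (∀ l μ : ℝ, 0 ≤ l → 0 ≤ μ → F l * F μ ≤ F (l + μ))

/-- A valuation on `R` with values in `ℝ≥0∞` (valuations of the paper, with `v 0 = ∞`). -/
def IsValn {R : Type*} [CommRing R] (v : R → ℝ≥0∞) : Prop :=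
  v 0 = ⊤ ∧ v 1 = 0 ∧ (∀ f g : R, v (f * g) = v f + v g) ∧
  (∀ f g : R, min (v f) (v g) ≤ v (f + g))

/-- `F` is linearly bounded by `G`. -/
def LinBoundedBy {R : Type*} [CommRing R] (F G : ℝ → Ideal R) : Prop :=
  ∃ C : ℝ, 0 < C ∧ ∀ l : ℝ, 0 < l → F (C * l) ≤ G l

/-- `λ_max(G;F) = sup {λ > 0 : ∃ m, F^{λm} ⊄ G^m}`. -/
noncomputable def lamMax {R : Type*} [CommRing R] (G F : ℝ → Ideal R) : ℝ :=
  sSup {l : ℝ | 0 < l ∧ ∃ m : ℕ, ¬ F (l * m) ≤ G (m : ℝ)}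

/-- with `λ_max^{(m)}(F_v;F) = max {λ > 0 : F^λ ⊄ F_v^m}`, one has
`p·λ_max^{(m)} ≤ λ_max^{(pm)}`, and `λ_max(F_v;F) = sup_m λ_max^{(m)}/m = lim_m λ_max^{(m)}/m`. -/
theorem stmt3 {R : Type*} [CommRing R] [IsDomain R] (m : Ideal R) (hmax : m.IsMaximal)
    (F : ℝ → Ideal R) (hF : IsMFiltration m F)
    (v : R → ℝ≥0∞) (hv : IsValn v)
    (Fv : ℝ → Ideal R) (hFv : ∀ (l : ℝ) (f : R), f ∈ Fv l ↔ ENNReal.ofReal l ≤ v f)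
    (hFvFil : IsMFiltration m Fv)
    (hbd₁ : LinBoundedBy F Fv) (hbd₂ : LinBoundedBy Fv F)
    (L : ℕ → ℝ)
    (hL : ∀ k : ℕ, 0 < k → IsGreatest {l : ℝ | 0 < l ∧ ¬ F l ≤ Fv (k : ℝ)} (L k)) :
    (∀ p k : ℕ, 0 < p → 0 < k → (p : ℝ) * L k ≤ L (p * k)) ∧
    lamMax Fv F = sSup {x : ℝ | ∃ k : ℕ, 0 < k ∧ x = L k / k} ∧
    Tendsto (fun k : ℕ => L k / k) atTop (nhds (lamMax Fv F)) := by
  obtain ⟨hF0, _, hFmono, _, hFmul⟩ := hF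
  obtain ⟨_, _, hvmul, _⟩ := hv
  obtain ⟨C, hC, hCbd⟩ := hbd₁
  -- not in Fv iff v f < ofReal l
  have hnotin : ∀ (l : ℝ) (f : R), f ∉ Fv l ↔ v f < ENNReal.ofReal l := by
    intro l f
    rw [hFv]
    exact not_le
  -- key superadditivity
  have key : ∀ j k : ℕ, 0 < j → 0 < k → L j + L k ≤ L (j + k) := by
    intro j k hj hk
    obtain ⟨⟨hLj, hFj⟩, _⟩ := hL j hj
    obtain ⟨⟨hLk, hFk⟩, _⟩ := hL k hk
    obtain ⟨f, hfF, hfv⟩ := SetLike.not_le_iff_exists.mp hFj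
    obtain ⟨g, hgF, hgv⟩ := SetLike.not_le_iff_exists.mp hFk
    refine (hL (j + k) (by omega)).2 ⟨by positivity, ?_⟩
    rw [SetLike.not_le_iff_exists]
    refine ⟨f * g, hFmul _ _ hLj.le hLk.le (Ideal.mul_mem_mul hfF hgF), ?_⟩
    rw [hnotin] at hfv hgv ⊢
    rw [hvmul]
    calc v f + v g < ENNReal.ofReal j + ENNReal.ofReal k := ENNReal.add_lt_add hfv hgv
      _ = ENNReal.ofReal ((j : ℝ) + (k : ℝ)) := (ENNReal.ofReal_add (by positivity) (by positivity)).symm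
      _ = ENNReal.ofReal ((j + k : ℕ) : ℝ) := by push_cast; ring_nf
  -- part 1
  have part1 : ∀ p k : ℕ, 0 < p → 0 < k → (p : ℝ) * L k ≤ L (p * k) := by
    intro p k hp hk
    induction p with
    | zero => omega
    | succ q ih =>
      rcases Nat.eq_zero_or_pos q with hq | hq
      · subst hq; simp
      · have h1 := ih hq
        have h2 := key (q * k) k (by positivity) hk
        have : ((q : ℝ) + 1) * L k = (q : ℝ) * L k + L k := by ring
        push_cast
        rw [this]
        calc (q : ℝ) * L k + L k ≤ L (q * k) + L k := by linarith
          _ ≤ L (q * k + k) := h2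
          _ = L ((q + 1) * k) := by ring_nf
  -- the two sets
  set S : Set ℝ := {l : ℝ | 0 < l ∧ ∃ m : ℕ, ¬ F (l * m) ≤ Fv (m : ℝ)} with hS
  set T : Set ℝ := {x : ℝ | ∃ k : ℕ, 0 < k ∧ x = L k / k} with hT
  -- every element of S is ≤ C
  have hSle : ∀ l ∈ S, l ≤ C := by
    intro l hl
    obtain ⟨hl0, n, hn⟩ := hl
    rcases Nat.eq_zero_or_pos n with hn0 | hn0
    · exfalso; apply hn; subst hn0
      simp only [Nat.cast_zero, mul_zero]
      rw [hF0 0 le_rfl]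
      rw [hFvFil.1 0 le_rfl]
    · by_contra hlt
      push_neg at hlt
      have hnR : (0 : ℝ) < n := by exact_mod_cast hn0
      exact hn (le_trans (hFmono _ _ (mul_le_mul_of_nonneg_right hlt.le hnR.le)) (hCbd n hnR))
  have hSbdd : BddAbove S := ⟨C, hSle⟩
  -- T ⊆ S
  have hTS : T ⊆ S := by
    rintro x ⟨k, hk, rfl⟩
    obtain ⟨⟨hLk, hFk⟩, _⟩ := hL k hk
    have hkR : (0 : ℝ) < k := by exact_mod_cast hk
    refine ⟨by positivity, k, ?_⟩
    rwa [div_mul_cancel₀ _ hkR.ne']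
  have hTbdd : BddAbove T := hSbdd.mono hTS
  have hTne : T.Nonempty := ⟨L 1 / 1, 1, one_pos, by norm_num⟩
  -- each element of S is bounded by an element of T
  have hST : ∀ l ∈ S, ∃ x ∈ T, l ≤ x := by
    intro l hl
    obtain ⟨hl0, n, hn⟩ := hl
    have hn0 : 0 < n := by
      by_contra h
      apply hn
      interval_cases n
      simp only [Nat.cast_zero, mul_zero]
      rw [hF0 0 le_rfl, hFvFil.1 0 le_rfl]
    have hnR : (0 : ℝ) < n := by exact_mod_cast hn0
    have hmem : l * n ∈ {x : ℝ | 0 < x ∧ ¬ F x ≤ Fv (n : ℝ)} := ⟨by positivity, hn⟩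
    have := (hL n hn0).2 hmem
    exact ⟨L n / n, ⟨n, hn0, rfl⟩, (le_div_iff₀ hnR).mpr this⟩
  have hSTsup : sSup S = sSup T := by
    apply le_antisymm
    · have hTpos : 0 ≤ sSup T := by
        obtain ⟨x, ⟨k, hk, rfl⟩⟩ := hTne
        obtain ⟨⟨hLk, _⟩, _⟩ := hL k hk
        have hkR : (0 : ℝ) < k := by exact_mod_cast hk
        exact le_trans (by positivity) (le_csSup hTbdd ⟨k, hk, rfl⟩)
      refine Real.sSup_le (fun x hx => ?_) hTpos
      obtain ⟨y, hy, hxy⟩ := hST x hx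
      exact hxy.trans (le_csSup hTbdd hy)
    · exact csSup_le_csSup hSbdd hTne hTS
  have part2 : lamMax Fv F = sSup T := by
    rw [lamMax, ← hS, hSTsup]
  refine ⟨part1, part2, ?_⟩
  -- Fekete's lemma
  set u : ℕ → ℝ := fun n => if n = 0 then 0 else -L n with hu
  have husub : Subadditive u := by
    intro a b
    rcases Nat.eq_zero_or_pos a with ha | ha
    · subst ha; simp [hu]
    rcases Nat.eq_zero_or_pos b with hb | hb
    · subst hb; simp [hu]
    simp only [hu, if_neg ha.ne', if_neg hb.ne', if_neg (by omega : a + b ≠ 0)]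
    have := key a b ha hb
    linarith
  have hbound : ∀ n : ℕ, 0 < n → L n / n ≤ C := by
    intro n hn
    exact hSle _ (hTS ⟨n, hn, rfl⟩)
  have heq : ∀ n : ℕ, L n / n = -(u n / n) := by
    intro n
    rcases Nat.eq_zero_or_pos n with hn | hn
    · subst hn; simp [hu]
    · simp [hu, if_neg hn.ne', neg_div]
  have hbdd : BddBelow (Set.range fun n : ℕ => u n / n) := by
    refine ⟨min (-C) 0, ?_⟩
    rintro x ⟨n, rfl⟩
    rcases Nat.eq_zero_or_pos n with hn | hn
    · subst hn; simpa [hu] using min_le_right (-C) (0:ℝ)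
    · have h1 := hbound n hn
      have h2 := heq n
      have hm := min_le_left (-C) (0:ℝ)
      show min (-C) 0 ≤ u n / n
      linarith
  have htend := husub.tendsto_lim hbdd
  have hlim : husub.lim = -sSup T := by
    rw [Subadditive.lim, Real.sInf_def]
    congr 1
    congr 1
    ext x
    simp only [Set.mem_neg, Set.mem_image, Set.mem_Ici, hT, Set.mem_setOf_eq]
    constructor
    · rintro ⟨n, hn1, hn⟩
      have hn0 : 0 < n := hn1
      refine ⟨n, hn0, ?_⟩
      have := heq n
      rw [hn] at this
      linarith
    · rintro ⟨k, hk, rfl⟩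
      refine ⟨k, hk, ?_⟩
      have := heq k
      linarith
  rw [part2]
  have : (fun k : ℕ => L k / k) = fun k : ℕ => -(u k / k) := funext heq
  rw [this]
  have := htend.neg
  rwa [hlim, neg_neg] at this
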